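/- Let G be a minimal counterexample (fewest edges) to the claim that planar graphs of girth ≥ 6 and maximum degree Δ ≥ 4 satisfy χ'_s ≤ 3Δ+6. If a vertex v of degree k ≥ 5 has exactly k−2 neighbors of degree at most 2, then at most k−5 of its 2-neighbors are weak, i.e., v has at least three 2-neighbors whose other neighbor has degree at least 4. -/

import Mathlib

open SimpleGraph Finset

universe u

variable {V : Type u}

/-- Two edges are at distance at most 2 (in the line graph sense): they share an
endpoint or some endpoint of one is adjacent to an endpoint of the other. -/
def edgesConflict (G : SimpleGraph V) (e f : Sym2 V) : Prop :=
  ∃ a b, a ∈ e ∧ b ∈ f ∧ (a = b ∨ G.Adj a b)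

/-- A strong edge coloring: distinct edges at distance at most 2 get distinct colors. -/
def IsStrongEdgeColoring (G : SimpleGraph V) {n : ℕ} (c : G.edgeSet → Fin n) : Prop :=
  ∀ e f : G.edgeSet, e ≠ f → edgesConflict G e.1 f.1 → c e ≠ c f

def HasStrongEdgeColoring (G : SimpleGraph V) (n : ℕ) : Prop :=
  ∃ c : G.edgeSet → Fin n, IsStrongEdgeColoring G c

/-- The strong chromatic index. -/
noncomputable def strongChromaticIndex (G : SimpleGraph V) : ℕ :=
  sInf { n | HasStrongEdgeColoring G n }

/-- A proper edge coloring: distinct edges sharing an endpoint get distinct colors. -/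
def IsProperEdgeColoring (G : SimpleGraph V) {n : ℕ} (c : G.edgeSet → Fin n) : Prop :=
  ∀ e f : G.edgeSet, e ≠ f → (∃ a, a ∈ e.1 ∧ a ∈ f.1) → c e ≠ c f

/-- The edge chromatic number (chromatic index). -/
noncomputable def edgeChromaticNumber (G : SimpleGraph V) : ℕ :=
  sInf { n | ∃ c : G.edgeSet → Fin n, IsProperEdgeColoring G c }

/-- `G` has `H` as a minor: disjoint nonempty connected branch sets, one per vertex of `H`,
with edges of `G` between branch sets corresponding to edges of `H`. -/
def HasMinor {W : Type} (G : SimpleGraph V) (H : SimpleGraph W) : Prop :=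
  ∃ b : W → Set V, (∀ w, (b w).Nonempty) ∧ (∀ w, (G.induce (b w)).Connected) ∧
    (Pairwise fun w₁ w₂ => Disjoint (b w₁) (b w₂)) ∧
    ∀ ⦃w₁ w₂⦄, H.Adj w₁ w₂ → ∃ a ∈ b w₁, ∃ a' ∈ b w₂, G.Adj a a'

/-- Planarity, via Wagner's theorem: no `K₅` minor and no `K₃,₃` minor. -/
def IsPlanar (G : SimpleGraph V) : Prop :=
  ¬ HasMinor G (⊤ : SimpleGraph (Fin 5)) ∧ ¬ HasMinor G (completeBipartiteGraph (Fin 3) (Fin 3))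

lemma edgesConflict_comm {G : SimpleGraph V} {e f : Sym2 V} (h : edgesConflict G e f) :
    edgesConflict G f e := by
  obtain ⟨a, b, ha, hb, hab⟩ := h
  refine ⟨b, a, hb, ha, ?_⟩
  rcases hab with h | h
  · exact Or.inl h.symm
  · exact Or.inr h.symm

lemma edge_other {G : SimpleGraph V} {e : Sym2 V} (he : e ∈ G.edgeSet) {x : V} (hx : x ∈ e) :
    ∃ t, G.Adj x t ∧ e = s(x, t) := by
  refine ⟨Sym2.Mem.other hx, ?_, (Sym2.other_spec hx).symm⟩
  have h2 := Sym2.other_spec hx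
  rw [← h2] at he
  exact he

lemma greedy_ext [Fintype V] (G : SimpleGraph V) {n : ℕ} (L : List G.edgeSet)
    (c : G.edgeSet → Fin n)
    (h1 : ∀ e f : G.edgeSet, e ≠ f → e ∉ L → f ∉ L → edgesConflict G e.1 f.1 → c e ≠ c f)
    (h2 : ∀ (i : ℕ) (h : i < L.length), ∃ C : Finset (Sym2 V), C.card < n ∧
      ∀ f : G.edgeSet, f ≠ L.get ⟨i, h⟩ → f ∉ L.drop i →
        edgesConflict G (L.get ⟨i, h⟩).1 f.1 → f.1 ∈ C) :
    HasStrongEdgeColoring G n := by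
  classical
  induction L generalizing c with
  | nil => exact ⟨c, fun e f hne hc => h1 e f hne List.not_mem_nil List.not_mem_nil hc⟩
  | cons e t ih =>
    haveI : Fintype G.edgeSet := Fintype.ofFinite _
    obtain ⟨C, hC, hcov⟩ := h2 0 (by simp)
    have hget : (e :: t).get ⟨0, by simp⟩ = e := rfl
    rw [hget] at hcov
    set S : Finset G.edgeSet := Finset.univ.filter (fun f : G.edgeSet => f.1 ∈ C) with hSdef
    have hS : S.card ≤ C.card := by
      apply Finset.card_le_card_of_injOn (fun f => f.1)
      · intro f hf
        exact (Finset.mem_filter.1 hf).2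
      · intro a _ b _ h
        exact Subtype.ext h
    have himg : (S.image c).card < n :=
      lt_of_le_of_lt (le_trans Finset.card_image_le hS) hC
    obtain ⟨col, hcol⟩ : ∃ col : Fin n, col ∉ S.image c := by
      by_contra hcon
      push_neg at hcon
      have : (Finset.univ : Finset (Fin n)).card ≤ (S.image c).card :=
        Finset.card_le_card (fun x _ => hcon x)
      rw [Finset.card_univ, Fintype.card_fin] at this
      omega
    have hmem : ∀ f : G.edgeSet, f ≠ e → f ∉ t → edgesConflict G e.1 f.1 →
        c f ∈ S.image c := by
      intro f hfe hft hc
      have : f.1 ∈ C := hcov f hfe (by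
        intro hmem
        rcases List.mem_cons.1 hmem with h | h
        · exact hfe h
        · exact hft h) hc
      exact Finset.mem_image_of_mem c (Finset.mem_filter.2 ⟨Finset.mem_univ f, this⟩)
    refine ih (Function.update c e col) ?_ ?_
    · intro e₁ f₁ hne he₁ hf₁ hconf
      by_cases h₁ : e₁ = e
      · subst h₁
        have hf₁e : f₁ ≠ e₁ := Ne.symm hne
        rw [Function.update_self, Function.update_of_ne hf₁e]
        intro heq
        exact hcol (heq ▸ hmem f₁ hf₁e hf₁ hconf)
      · by_cases h₂ : f₁ = e
        · subst h₂
          rw [Function.update_self, Function.update_of_ne h₁]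
          intro heq
          exact hcol (heq ▸ hmem e₁ h₁ he₁ (edgesConflict_comm hconf))
        · rw [Function.update_of_ne h₁, Function.update_of_ne h₂]
          exact h1 e₁ f₁ hne (fun h => (List.mem_cons.1 h).elim h₁ he₁)
            (fun h => (List.mem_cons.1 h).elim h₂ hf₁) hconf
    · intro i h
      obtain ⟨C', hC', hcov'⟩ := h2 (i + 1) (by simpa using Nat.succ_lt_succ h)
      exact ⟨C', hC', by simpa using hcov'⟩

lemma nbr_in_path [DecidableEq V] {H : SimpleGraph V} (hac : H.IsAcyclic) {x y c : V}
    (h : H.Adj x y) (q : H.Walk y c) (hp : (SimpleGraph.Walk.cons h q).IsPath) {t : V}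
    (ht : H.Adj x t) (hts : t ∈ (SimpleGraph.Walk.cons h q).support) : t = y := by
  by_contra hty
  have hpu := isAcyclic_iff_path_unique.1 hac
  have h1 : (SimpleGraph.Path.singleton ht) =
      ⟨(SimpleGraph.Walk.cons h q).takeUntil t hts, hp.takeUntil hts⟩ := hpu _ _
  have hedge : s(x, t) ∈ ((SimpleGraph.Walk.cons h q).takeUntil t hts).edges := by
    have := congrArg (fun p : H.Path x t => p.1.edges) h1
    simp only [SimpleGraph.Path.singleton] at this
    rw [← this]
    simp
  have hsub := SimpleGraph.Walk.edges_takeUntil_subset (SimpleGraph.Walk.cons h q) hts hedge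
  rw [SimpleGraph.Walk.edges_cons] at hsub
  rcases List.mem_cons.1 hsub with h' | h'
  · exact hty (Sym2.congr_right.1 h')
  · have hx : x ∈ q.support := SimpleGraph.Walk.fst_mem_support_of_mem_edges q h'
    exact ((SimpleGraph.Walk.cons_isPath_iff h q).1 hp).2 hx

lemma max_path_start [Fintype V] [DecidableEq V] {H : SimpleGraph V} (hac : H.IsAcyclic) {m : ℕ}
    (hmax : ∀ (a b : V) (r : H.Walk a b), r.IsPath → r.length ≤ m)
    {x y c : V} (h : H.Adj x y) (q : H.Walk y c) (hp : (SimpleGraph.Walk.cons h q).IsPath)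
    (hlen : (SimpleGraph.Walk.cons h q).length = m) {t : V} (ht : H.Adj x t) : t = y := by
  by_cases hts : t ∈ (SimpleGraph.Walk.cons h q).support
  · exact nbr_in_path hac h q hp ht hts
  · exfalso
    have hp' : (SimpleGraph.Walk.cons ht.symm (SimpleGraph.Walk.cons h q)).IsPath :=
      (SimpleGraph.Walk.cons_isPath_iff _ _).2 ⟨hp, hts⟩
    have := hmax _ _ _ hp'
    rw [SimpleGraph.Walk.length_cons, hlen] at this
    omega

lemma good_edge [Fintype V] [DecidableEq V] {H : SimpleGraph V} (hac : H.IsAcyclic)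
    {x0 y0 : V} (h0 : H.Adj x0 y0) :
    ∃ x y w, H.Adj x y ∧ (∀ t, H.Adj x t → t = y) ∧
      ∀ z, H.Adj y z → z ≠ x → z ≠ w → ∀ t, H.Adj z t → t = y := by
  classical
  set P : ℕ → Prop := fun m => ∃ (a b : V) (r : H.Walk a b), r.IsPath ∧ r.length = m with hPdef
  have hbound : ∀ m, P m → m < Fintype.card V := by
    rintro m ⟨a, b, r, hr, hrl⟩
    exact hrl ▸ hr.length_lt
  have hP1 : P 1 := ⟨x0, y0, SimpleGraph.Walk.cons h0 SimpleGraph.Walk.nil,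
    (SimpleGraph.Walk.cons_isPath_iff _ _).2 ⟨SimpleGraph.Walk.IsPath.nil, by simp [h0.ne]⟩, rfl⟩
  have h1N : 1 ≤ Fintype.card V := le_of_lt (hbound 1 hP1)
  set m := Nat.findGreatest P (Fintype.card V) with hm
  have hm1 : 1 ≤ m := Nat.le_findGreatest h1N hP1
  have hspec : P m := Nat.findGreatest_spec h1N hP1
  have hmax : ∀ (a b : V) (r : H.Walk a b), r.IsPath → r.length ≤ m := by
    intro a b r hr
    by_contra hgt
    push_neg at hgt
    exact Nat.findGreatest_is_greatest hgt (le_of_lt (hbound _ ⟨a, b, r, hr, rfl⟩))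
      ⟨a, b, r, hr, rfl⟩
  obtain ⟨a, b, r, hr, hrl⟩ := hspec
  cases r with
  | nil => simp at hrl; omega
  | @cons _ y _ h q =>
    cases q with
    | nil =>
      refine ⟨a, b, b, h, fun t ht => max_path_start hac hmax h _ hr hrl ht, ?_⟩
      intro z hz _ _ t ht
      have hp' : (SimpleGraph.Walk.cons hz.symm (SimpleGraph.Walk.nil : H.Walk b b)).IsPath :=
        (SimpleGraph.Walk.cons_isPath_iff _ _).2 ⟨SimpleGraph.Walk.IsPath.nil, by simp [hz.ne']⟩
      have hl' : (SimpleGraph.Walk.cons hz.symm (SimpleGraph.Walk.nil : H.Walk b b)).length = m := by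
        simp only [SimpleGraph.Walk.length_cons, SimpleGraph.Walk.length_nil]
        simpa using hrl
      exact max_path_start hac hmax hz.symm _ hp' hl' ht
    | @cons _ w _ h2 q2 =>
      refine ⟨a, y, w, ?_⟩
      refine ⟨h, fun t ht => max_path_start hac hmax h _ hr hrl ht, ?_⟩
      intro z hz hzx hzw t ht
      have hqp : (SimpleGraph.Walk.cons h2 q2).IsPath :=
        ((SimpleGraph.Walk.cons_isPath_iff h _).1 hr).1
      have hzq : z ∉ (SimpleGraph.Walk.cons h2 q2).support := by
        intro hmem
        exact hzw (nbr_in_path hac h2 q2 hqp hz hmem)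
      have hp' : (SimpleGraph.Walk.cons hz.symm (SimpleGraph.Walk.cons h2 q2)).IsPath :=
        (SimpleGraph.Walk.cons_isPath_iff _ _).2 ⟨hqp, hzq⟩
      have hl' : (SimpleGraph.Walk.cons hz.symm (SimpleGraph.Walk.cons h2 q2)).length = m := by
        rw [SimpleGraph.Walk.length_cons]
        rw [SimpleGraph.Walk.length_cons] at hrl
        exact hrl
      exact max_path_start hac hmax hz.symm _ hp' hl' ht

lemma ncard_neighborSet_eq_degree [Fintype V] (G : SimpleGraph V) [DecidableRel G.Adj] (v : V) :
    (G.neighborSet v).ncard = G.degree v := by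
  rw [← Nat.card_coe_set_eq, Nat.card_eq_fintype_card, card_neighborSet_eq_degree]

lemma mem_inc [Fintype V] [DecidableEq V] {G : SimpleGraph V} [DecidableRel G.Adj] {v : V}
    {f : Sym2 V} (hf : f ∈ G.edgeSet) (hv : v ∈ f) : f ∈ G.incidenceFinset v := by
  rw [SimpleGraph.mem_incidenceFinset]
  exact ⟨hf, hv⟩

lemma forest_coloring [Fintype V] (H : SimpleGraph V) (hac : H.IsAcyclic) (n : ℕ)
    (hdeg : ∀ x, 2 * (H.neighborSet x).ncard ≤ n + 1) : HasStrongEdgeColoring H n := by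
  classical
  by_cases hE : ∃ x y, H.Adj x y
  · obtain ⟨x0, y0, h0⟩ := hE
    obtain ⟨x, y, w, hxy, hx, hz⟩ := good_edge hac h0
    have he : s(x, y) ∈ H.edgeSet := hxy
    have hle : H.deleteEdges {s(x, y)} ≤ H := SimpleGraph.deleteEdges_le _
    have hES : (H.deleteEdges {s(x, y)}).edgeSet = H.edgeSet \ {s(x, y)} :=
      SimpleGraph.edgeSet_deleteEdges _
    have hac' : (H.deleteEdges {s(x, y)}).IsAcyclic :=
      fun v c hc => hac (c.mapLe hle) (hc.mapLe hle)
    have hdeg' : ∀ x', 2 * ((H.deleteEdges {s(x, y)}).neighborSet x').ncard ≤ n + 1 := by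
      intro x'
      refine le_trans (Nat.mul_le_mul_left 2 (Set.ncard_le_ncard ?_ (Set.toFinite _))) (hdeg x')
      exact fun t ht => hle ht
    have hdec : (H.deleteEdges {s(x, y)}).edgeSet.ncard < H.edgeSet.ncard := by
      apply Set.ncard_lt_ncard _ (Set.toFinite _)
      rw [hES]
      exact Set.sdiff_singleton_ssubset.2 he
    obtain ⟨c', hc'⟩ := forest_coloring (H.deleteEdges {s(x, y)}) hac' n hdeg'
    have hn1 : 1 ≤ n := by
      have h2y := hdeg y
      have : 0 < (H.neighborSet y).ncard :=
        (Set.ncard_pos (Set.toFinite _)).2 ⟨x, hxy.symm⟩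
      omega
    set c₀ : H.edgeSet → Fin n := fun f =>
      if h : f.1 ∈ (H.deleteEdges {s(x, y)}).edgeSet then c' ⟨f.1, h⟩ else ⟨0, hn1⟩ with hc₀
    have hmem' : ∀ f : H.edgeSet, f.1 ≠ s(x, y) → f.1 ∈ (H.deleteEdges {s(x, y)}).edgeSet := by
      intro f hf
      rw [hES]
      exact ⟨f.2, by simpa using hf⟩
    apply greedy_ext H [⟨s(x, y), he⟩] c₀
    · intro e₁ f₁ hne he₁ hf₁ hconf
      simp only [List.mem_singleton] at he₁ hf₁
      have hvE : e₁.1 ≠ s(x, y) := fun h => he₁ (Subtype.ext h)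
      have hvF : f₁.1 ≠ s(x, y) := fun h => hf₁ (Subtype.ext h)
      have he₁' := hmem' e₁ hvE
      have hf₁' := hmem' f₁ hvF
      have hconf' : edgesConflict (H.deleteEdges {s(x, y)}) e₁.1 f₁.1 := by
        obtain ⟨α, β, hα, hβ, hor⟩ := hconf
        refine ⟨α, β, hα, hβ, ?_⟩
        rcases hor with h | hadj
        · exact Or.inl h
        · right
          rw [SimpleGraph.deleteEdges_adj]
          refine ⟨hadj, ?_⟩
          simp only [Set.mem_singleton_iff]
          intro heq
          rcases Sym2.eq_iff.1 heq with ⟨hax, hby⟩ | ⟨hay, hbx⟩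
          · obtain ⟨t, hxt, het⟩ := edge_other e₁.2 (hax ▸ hα)
            exact hvE (by rw [het, hx t hxt])
          · obtain ⟨t, hxt, hft⟩ := edge_other f₁.2 (hbx ▸ hβ)
            exact hvF (by rw [hft, hx t hxt])
      have := hc' ⟨e₁.1, he₁'⟩ ⟨f₁.1, hf₁'⟩
        (fun hh => hne (Subtype.ext (Subtype.mk.inj hh))) hconf'
      simp only [hc₀]
      rw [dif_pos he₁', dif_pos hf₁']
      exact this
    · intro i hi
      simp only [List.length_singleton] at hi
      have hi0 : i = 0 := by omega
      subst hi0
      refine ⟨((H.incidenceFinset y).erase s(x, y)) ∪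
        (if H.Adj y w then (H.incidenceFinset w).erase s(y, w) else ∅), ?_, ?_⟩
      · have h1 : ((H.incidenceFinset y).erase s(x, y)).card = H.degree y - 1 := by
          rw [Finset.card_erase_of_mem (mem_inc he (by simp)),
            card_incidenceFinset_eq_degree]
        have h2 : (if H.Adj y w then (H.incidenceFinset w).erase s(y, w) else ∅).card
            ≤ H.degree w - 1 := by
          by_cases hyw : H.Adj y w
          · rw [if_pos hyw, Finset.card_erase_of_mem (mem_inc hyw (by simp)),
              card_incidenceFinset_eq_degree]
          · rw [if_neg hyw]
            simp
        have hay : 2 * H.degree y ≤ n + 1 := by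
          rw [← ncard_neighborSet_eq_degree]; exact hdeg y
        have haw : 2 * H.degree w ≤ n + 1 := by
          rw [← ncard_neighborSet_eq_degree]; exact hdeg w
        calc _ ≤ _ := Finset.card_union_le _ _
        _ < n := by omega
      · intro f hfe _ hconf
        have hfval : f.1 ≠ s(x, y) := fun h => hfe (Subtype.ext h)
        have hfy : y ∈ f.1 → f.1 ∈ ((H.incidenceFinset y).erase s(x, y)) :=
          fun h => Finset.mem_erase.2 ⟨hfval, mem_inc f.2 h⟩
        have hcontra : x ∈ f.1 → False := by
          intro hxf
          obtain ⟨t, hxt, hft'⟩ := edge_other f.2 hxf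
          exact hfval (by rw [hft', hx t hxt])
        obtain ⟨α, β, hα, hβ, hor⟩ := hconf
        have hαxy : α = x ∨ α = y := Sym2.mem_iff.1 hα
        obtain ⟨t, hβt, hft⟩ := edge_other f.2 hβ
        rcases hor with heq | hadj
        · rcases hαxy with h' | h'
          · exact absurd (h' ▸ heq ▸ hβ) (fun hc => hcontra hc)
          · exact Finset.mem_union_left _ (hfy (h' ▸ heq ▸ hβ))
        · rcases hαxy with h' | h'
          · have hβy : β = y := hx β (h' ▸ hadj)
            exact Finset.mem_union_left _ (hfy (hβy ▸ hβ))
          · have hadjy : H.Adj y β := h' ▸ hadj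
            by_cases hbx : β = x
            · exact absurd (hbx ▸ hβ) (fun hc => hcontra hc)
            · by_cases hbw : β = w
              · by_cases hty : t = y
                · exact Finset.mem_union_left _ (hfy (by rw [hft]; simp [hty]))
                · refine Finset.mem_union_right _ ?_
                  rw [if_pos (hbw ▸ hadjy)]
                  refine Finset.mem_erase.2 ⟨?_, mem_inc f.2 (hbw ▸ hβ)⟩
                  rw [hft, hbw]
                  intro hcontra2
                  rw [Sym2.eq_swap] at hcontra2
                  exact hty (Sym2.congr_left.1 hcontra2)
              · have hzz := hz β hadjy hbx hbw t hβt
                exact Finset.mem_union_left _ (hfy (by rw [hft]; simp [hzz]))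
  · push_neg at hE
    have hfalse : ∀ e : H.edgeSet, False := by
      rintro ⟨e, hee⟩
      induction e using Sym2.ind with
      | _ a b => exact hE a b hee
    exact ⟨fun e => (hfalse e).elim, fun e f hne hc => (hfalse e).elim⟩
termination_by H.edgeSet.ncard
decreasing_by
  simpa [SimpleGraph.edgeSet_deleteEdges] using hdec

lemma hasMinor_mono {W : Type} {G G' : SimpleGraph V} (h : G ≤ G') {K : SimpleGraph W}
    (hm : HasMinor G K) : HasMinor G' K := by
  obtain ⟨b, h1, h2, h3, h4⟩ := hm
  refine ⟨b, h1, fun w => (h2 w).mono (fun x y hxy => h hxy), h3, fun w₁ w₂ ha => ?_⟩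
  obtain ⟨a, ha1, a', ha2, ha3⟩ := h4 ha
  exact ⟨a, ha1, a', ha2, h ha3⟩

lemma isPlanar_mono {G G' : SimpleGraph V} (h : G ≤ G') (hp : IsPlanar G') : IsPlanar G :=
  ⟨fun hm => hp.1 (hasMinor_mono h hm), fun hm => hp.2 (hasMinor_mono h hm)⟩


/-- In a minimal counterexample to "planar, girth ≥ 6, max degree Δ ≥ 4 ⟹ χ'ₛ ≤ 3Δ+6",
every vertex v of degree k ≥ 5 with exactly k−2 neighbors of degree at most 2 has at
least three 2-neighbors that are not weak, i.e. whose other neighbor has degree ≥ 4. -/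
theorem min_cex_weak_strong (V : Type) [Fintype V] [DecidableEq V] (G : SimpleGraph V)
    [DecidableRel G.Adj] (Δ : ℕ)
    (hplanar : IsPlanar G) (hgirth : 6 ≤ G.girth) (hmax : G.maxDegree = Δ) (hΔ : 4 ≤ Δ)
    (hcex : ¬ HasStrongEdgeColoring G (3 * Δ + 6))
    (hmin : ∀ (W : Type) [Fintype W] [DecidableEq W] (H : SimpleGraph W)
      [DecidableRel H.Adj], IsPlanar H → 6 ≤ H.girth → H.maxDegree ≤ Δ →
      H.edgeFinset.card < G.edgeFinset.card → HasStrongEdgeColoring H (3 * Δ + 6)) :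
    ∀ v, 5 ≤ G.degree v →
      ((G.neighborFinset v).filter fun u => G.degree u ≤ 2).card = G.degree v - 2 →
      3 ≤ ((G.neighborFinset v).filter fun u =>
        G.degree u = 2 ∧ ∀ w, G.Adj u w → w ≠ v → 4 ≤ G.degree w).card := by
  classical
  intro v hdegv hsmall
  by_contra hcon
  push_neg at hcon
  set S : Finset V := (G.neighborFinset v).filter (fun u => G.degree u ≤ 2) with hSdef
  set T : Finset V := (G.neighborFinset v).filter (fun u =>
    G.degree u = 2 ∧ ∀ w, G.Adj u w → w ≠ v → 4 ≤ G.degree w) with hTdef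
  set B : Finset V := S \ T with hBdef
  have hTS : T ⊆ S := by
    intro u hu
    rw [hTdef, Finset.mem_filter] at hu
    rw [hSdef, Finset.mem_filter]
    exact ⟨hu.1, le_of_eq hu.2.1⟩
  have hSN : S ⊆ G.neighborFinset v := Finset.filter_subset _ _
  have hkΔ : G.degree v ≤ Δ := hmax ▸ G.degree_le_maxDegree v
  have hcardT : T.card ≤ 2 := by omega
  have hcardB : 1 ≤ B.card := by
    rw [hBdef, Finset.card_sdiff_of_subset hTS, hsmall]
    omega
  have hBadj : ∀ u ∈ B, G.Adj v u := by
    intro u hu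
    rw [hBdef, Finset.mem_sdiff] at hu
    exact (G.mem_neighborFinset v u).1 (hSN hu.1)
  have hBdeg : ∀ u ∈ B, G.degree u ≤ 2 := by
    intro u hu
    rw [hBdef, Finset.mem_sdiff, hSdef, Finset.mem_filter] at hu
    exact hu.1.2
  have hBbad : ∀ u ∈ B, G.degree u = 2 →
      ∃ x, G.Adj u x ∧ x ≠ v ∧ G.degree x ≤ 3 := by
    intro u hu hd2
    rw [hBdef, Finset.mem_sdiff] at hu
    have := hu.2
    rw [hTdef, Finset.mem_filter] at this
    push_neg at this
    obtain ⟨x, hx1, hx2, hx3⟩ := this (hSN hu.1) hd2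
    exact ⟨x, hx1, hx2, by omega⟩
  -- the "other neighbor" function
  have hBbad' : ∀ u, ∃ x, u ∈ B → G.degree u = 2 →
      G.Adj u x ∧ x ≠ v ∧ G.degree x ≤ 3 := by
    intro u
    by_cases h : u ∈ B ∧ G.degree u = 2
    · obtain ⟨x, hx⟩ := hBbad u h.1 h.2
      exact ⟨x, fun _ _ => hx⟩
    · exact ⟨v, fun h1 h2 => absurd ⟨h1, h2⟩ h⟩
  choose wf hwf' using hBbad'
  have hwf : ∀ u ∈ B, G.degree u = 2 →
      G.Adj u (wf u) ∧ wf u ≠ v ∧ G.degree (wf u) ≤ 3 := fun u hu hd2 => hwf' u hu hd2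
  have hdeg1 : ∀ u ∈ B, 1 ≤ G.degree u := by
    intro u hu
    exact Finset.card_pos.2 ⟨v, (G.mem_neighborFinset u v).2 (hBadj u hu).symm⟩
  have hnbru : ∀ u ∈ B, ∀ t, G.Adj u t → t = v ∨ (G.degree u = 2 ∧ t = wf u) := by
    intro u hu t hut
    by_cases hd2 : G.degree u = 2
    · obtain ⟨hw1, hw2, _⟩ := hwf u hu hd2
      have hnb : ({v, wf u} : Finset V) = G.neighborFinset u := by
        apply Finset.eq_of_subset_of_card_le
        · intro z hz
          rcases Finset.mem_insert.1 hz with hzv | hz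
          · rw [hzv]
            exact (G.mem_neighborFinset u v).2 (hBadj u hu).symm
          · rw [Finset.mem_singleton] at hz
            rw [hz]
            exact (G.mem_neighborFinset u (wf u)).2 hw1
        · have : G.degree u = (G.neighborFinset u).card := rfl
          rw [← this, hd2]
          rw [Finset.card_insert_of_notMem (by simp [Ne.symm hw2]), Finset.card_singleton]
      have ht : t ∈ ({v, wf u} : Finset V) := by
        rw [hnb]
        exact (G.mem_neighborFinset u t).2 hut
      rcases Finset.mem_insert.1 ht with htv | ht
      · exact Or.inl htv
      · rw [Finset.mem_singleton] at ht
        exact Or.inr ⟨hd2, ht⟩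
    · have hd1 : G.degree u = 1 := by
        have h1 := hBdeg u hu
        have h2 := hdeg1 u hu
        omega
      have hnb : ({v} : Finset V) = G.neighborFinset u := by
        apply Finset.eq_of_subset_of_card_le
        · intro z hz
          rw [Finset.mem_singleton] at hz
          rw [hz]
          exact (G.mem_neighborFinset u v).2 (hBadj u hu).symm
        · have hh : G.degree u = (G.neighborFinset u).card := rfl
          rw [← hh, hd1, Finset.card_singleton]
      have ht : t ∈ ({v} : Finset V) := by
        rw [hnb]
        exact (G.mem_neighborFinset u t).2 hut
      rw [Finset.mem_singleton] at ht
      exact Or.inl ht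
  -- the deleted graph
  set D : Set (Sym2 V) := {e | ∃ x ∈ e, x ∈ B} with hDdef
  set H' : SimpleGraph V := G.deleteEdges D with hH'def
  letI : DecidableRel H'.Adj := Classical.decRel _
  have hle' : H' ≤ G := G.deleteEdges_le D
  have hES' : H'.edgeSet = G.edgeSet \ D := G.edgeSet_deleteEdges D
  have hdegmono : ∀ x, H'.degree x ≤ G.degree x := by
    intro x
    apply Finset.card_le_card
    intro t ht
    exact (G.mem_neighborFinset x t).2 (hle' ((H'.mem_neighborFinset x t).1 ht))
  have hmaxH' : H'.maxDegree ≤ Δ :=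
    SimpleGraph.maxDegree_le_of_forall_degree_le _ _
      (fun x => le_trans (hdegmono x) (hmax ▸ G.degree_le_maxDegree x))
  have hplanarH' : IsPlanar H' := isPlanar_mono hle' hplanar
  obtain ⟨u0, hu0⟩ := Finset.card_pos.1 (by omega : 0 < B.card)
  have hcardH' : H'.edgeFinset.card < G.edgeFinset.card := by
    apply Finset.card_lt_card
    constructor
    · intro g hg
      rw [SimpleGraph.mem_edgeFinset] at *
      exact (SimpleGraph.edgeSet_subset_edgeSet.2 hle') hg
    · intro hsub
      have h1 : s(v, u0) ∈ G.edgeFinset := SimpleGraph.mem_edgeFinset.2 (hBadj u0 hu0)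
      have h2 := hsub h1
      rw [SimpleGraph.mem_edgeFinset, hES'] at h2
      exact h2.2 ⟨u0, by simp, hu0⟩
  have hcolH' : HasStrongEdgeColoring H' (3 * Δ + 6) := by
    by_cases hac : H'.IsAcyclic
    · apply forest_coloring H' hac
      intro x
      have h1 : (H'.neighborSet x).ncard ≤ (G.neighborSet x).ncard :=
        Set.ncard_le_ncard (fun t ht => hle' ht) (Set.toFinite _)
      have h2 : (G.neighborSet x).ncard = G.degree x := ncard_neighborSet_eq_degree G x
      have h3 : G.degree x ≤ Δ := hmax ▸ G.degree_le_maxDegree x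
      omega
    · have hgirth' : 6 ≤ H'.girth := le_trans hgirth (SimpleGraph.girth_anti hle' hac)
      exact hmin V H' hplanarH' hgirth' hmaxH' hcardH'
  obtain ⟨c', hc'⟩ := hcolH'
  have hn1 : 0 < 3 * Δ + 6 := by omega
  set c₀ : G.edgeSet → Fin (3 * Δ + 6) := fun f =>
    if h : f.1 ∈ H'.edgeSet then c' ⟨f.1, h⟩ else ⟨0, hn1⟩ with hc₀def
  -- the lists of deleted edges
  have hp2adj : ∀ x ∈ B.filter (fun u => G.degree u = 2), G.Adj x (wf x) :=
    fun x hx => (hwf x (Finset.mem_filter.1 hx).1 (Finset.mem_filter.1 hx).2).1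
  set p1 : List G.edgeSet := B.attach.toList.map
    (fun u => ⟨s(v, u.1), (G.mem_edgeSet).2 (hBadj u.1 u.2)⟩) with hp1def
  set p2 : List G.edgeSet := ((B.filter (fun u => G.degree u = 2)).attach.toList.map
    (fun u => ⟨s(u.1, wf u.1), (G.mem_edgeSet).2 (hp2adj u.1 u.2)⟩)) with hp2def
  set L : List G.edgeSet := p1 ++ p2 with hLdef
  have hp1_of : ∀ (f : G.edgeSet) (u : V), u ∈ B → f.1 = s(v, u) → f ∈ p1 := by
    intro f u hu hval
    rw [hp1def]
    apply List.mem_map.2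
    exact ⟨⟨u, hu⟩, by simp [Finset.mem_toList], Subtype.ext hval.symm⟩
  have hp2_of : ∀ (f : G.edgeSet) (u : V), u ∈ B → G.degree u = 2 →
      f.1 = s(u, wf u) → f ∈ p2 := by
    intro f u hu hd2 hval
    rw [hp2def]
    apply List.mem_map.2
    exact ⟨⟨u, Finset.mem_filter.2 ⟨hu, hd2⟩⟩, by simp [Finset.mem_toList],
      Subtype.ext hval.symm⟩
  have hp1_dest : ∀ g ∈ p1, ∃ u ∈ B, (g : G.edgeSet).1 = s(v, u) := by
    intro g hg
    rw [hp1def] at hg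
    obtain ⟨u, _, rfl⟩ := List.mem_map.1 hg
    exact ⟨u.1, u.2, rfl⟩
  have hp2_dest : ∀ g ∈ p2, ∃ u ∈ B, G.degree u = 2 ∧ (g : G.edgeSet).1 = s(u, wf u) := by
    intro g hg
    rw [hp2def] at hg
    obtain ⟨u, _, rfl⟩ := List.mem_map.1 hg
    exact ⟨u.1, (Finset.mem_filter.1 u.2).1, (Finset.mem_filter.1 u.2).2, rfl⟩
  -- edges not in L have no endpoint in B
  have hnotB : ∀ (f : G.edgeSet), f ∉ L → ∀ x, x ∈ f.1 → x ∉ B := by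
    intro f hf x hxf hxB
    obtain ⟨t, hxt, hft⟩ := edge_other f.2 hxf
    rcases hnbru x hxB t hxt with htv | ⟨hd2, htw⟩
    · exact hf (List.mem_append_left _ (hp1_of f x hxB (by rw [hft, htv, Sym2.eq_swap])))
    · exact hf (List.mem_append_right _ (hp2_of f x hxB hd2 (by rw [hft, htw])))
  have hmemH' : ∀ (f : G.edgeSet), (∀ x, x ∈ f.1 → x ∉ B) → f.1 ∈ H'.edgeSet := by
    intro f hfB
    rw [hES']
    refine ⟨f.2, ?_⟩
    rintro ⟨x, hx1, hx2⟩
    exact hfB x hx1 hx2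
  -- final contradiction
  apply hcex
  apply greedy_ext G L c₀
  · intro e₁ f₁ hne he₁ hf₁ hconf
    have he₁' : e₁.1 ∈ H'.edgeSet := hmemH' e₁ (hnotB e₁ he₁)
    have hf₁' : f₁.1 ∈ H'.edgeSet := hmemH' f₁ (hnotB f₁ hf₁)
    have hconf' : edgesConflict H' e₁.1 f₁.1 := by
      obtain ⟨α, β, hα, hβ, hor⟩ := hconf
      refine ⟨α, β, hα, hβ, ?_⟩
      rcases hor with h | hadj
      · exact Or.inl h
      · right
        rw [hH'def, SimpleGraph.deleteEdges_adj]
        refine ⟨hadj, ?_⟩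
        rintro ⟨x, hx1, hx2⟩
        rcases Sym2.mem_iff.1 hx1 with rfl | rfl
        · exact hnotB e₁ he₁ x hα hx2
        · exact hnotB f₁ hf₁ x hβ hx2
    have := hc' ⟨e₁.1, he₁'⟩ ⟨f₁.1, hf₁'⟩
      (fun hh => hne (Subtype.ext (Subtype.mk.inj hh))) hconf'
    simp only [hc₀def]
    rw [dif_pos he₁', dif_pos hf₁']
    exact this
  · intro i hi
    set e : G.edgeSet := L.get ⟨i, hi⟩ with hedef
    have hTN : T ⊆ G.neighborFinset v := by
      rw [hTdef]; exact Finset.filter_subset _ _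
    by_cases hip : i < p1.length
    · -- phase 1 : e = s(v, u) for some u ∈ B
      have he1 : e ∈ p1 := by
        have hEE : L.get ⟨i, hi⟩ = p1[i] := by
          rw [List.get_eq_getElem]
          exact List.getElem_append_left hip
        rw [hedef, hEE]
        exact List.getElem_mem _
      obtain ⟨u, huB, hval⟩ := hp1_dest _ he1
      have hpost : ∀ g ∈ p2, g ∈ L.drop i := by
        intro g hg
        show g ∈ (p1 ++ p2).drop i
        rw [List.drop_append_of_le_length (le_of_lt hip)]
        exact List.mem_append_right _ hg
      set C : Finset (Sym2 V) := ((G.incidenceFinset v).erase s(v, u) ∪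
        (if G.degree u = 2 then (G.incidenceFinset (wf u)).erase s(u, wf u) else ∅)) ∪
        ((G.neighborFinset v \ B).biUnion (fun b => (G.incidenceFinset b).erase s(v, b)))
        with hCdef
      refine ⟨C, ?_, ?_⟩
      · -- cardinality bound
        have hc1 : ((G.incidenceFinset v).erase s(v, u)).card = G.degree v - 1 := by
          rw [Finset.card_erase_of_mem
            (mem_inc ((G.mem_edgeSet).2 (hBadj u huB)) (by simp)),
            G.card_incidenceFinset_eq_degree]
        have hc2 : (if G.degree u = 2 then
            (G.incidenceFinset (wf u)).erase s(u, wf u) else ∅).card ≤ 2 := by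
          by_cases hd2 : G.degree u = 2
          · rw [if_pos hd2]
            have hadjw := (hwf u huB hd2).1
            have hdw := (hwf u huB hd2).2.2
            rw [Finset.card_erase_of_mem (mem_inc ((G.mem_edgeSet).2 hadjw) (by simp)),
              G.card_incidenceFinset_eq_degree]
            omega
          · rw [if_neg hd2]
            simp
        have hsplit : G.neighborFinset v \ B = T ∪ (G.neighborFinset v \ S) := by
          ext b
          constructor
          · intro hb
            obtain ⟨hbN, hbB⟩ := Finset.mem_sdiff.1 hb
            by_cases hbT : b ∈ T
            · exact Finset.mem_union_left _ hbT
            · refine Finset.mem_union_right _ (Finset.mem_sdiff.2 ⟨hbN, fun hbS => ?_⟩)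
              exact hbB (by rw [hBdef]; exact Finset.mem_sdiff.2 ⟨hbS, hbT⟩)
          · intro hb
            rcases Finset.mem_union.1 hb with hbT | hbNS
            · refine Finset.mem_sdiff.2 ⟨hTN hbT, fun hbB => ?_⟩
              rw [hBdef] at hbB
              exact (Finset.mem_sdiff.1 hbB).2 hbT
            · obtain ⟨hbN, hbS⟩ := Finset.mem_sdiff.1 hbNS
              refine Finset.mem_sdiff.2 ⟨hbN, fun hbB => ?_⟩
              rw [hBdef] at hbB
              exact hbS (Finset.mem_sdiff.1 hbB).1
        have hdisj : Disjoint T (G.neighborFinset v \ S) := by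
          rw [Finset.disjoint_left]
          intro b hbT hbNS
          exact (Finset.mem_sdiff.1 hbNS).2 (hTS hbT)
        have hc3 : ((G.neighborFinset v \ B).biUnion
            (fun b => (G.incidenceFinset b).erase s(v, b))).card ≤ 2 * 1 + 2 * (Δ - 1) := by
          refine le_trans (Finset.card_biUnion_le) ?_
          rw [hsplit, Finset.sum_union hdisj]
          have hTsum : ∑ b ∈ T, ((G.incidenceFinset b).erase s(v, b)).card ≤ T.card * 1 := by
            rw [← smul_eq_mul]
            apply Finset.sum_le_card_nsmul
            intro b hb
            have hadj : G.Adj v b := (G.mem_neighborFinset v b).1 (hTN hb)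
            have hdb : G.degree b = 2 := by
              rw [hTdef] at hb
              exact (Finset.mem_filter.1 hb).2.1
            rw [Finset.card_erase_of_mem (mem_inc ((G.mem_edgeSet).2 hadj) (by simp)),
              G.card_incidenceFinset_eq_degree]
            omega
          have hNSsum : ∑ b ∈ (G.neighborFinset v \ S),
              ((G.incidenceFinset b).erase s(v, b)).card
              ≤ (G.neighborFinset v \ S).card * (Δ - 1) := by
            rw [← smul_eq_mul]
            apply Finset.sum_le_card_nsmul
            intro b hb
            have hadj : G.Adj v b := (G.mem_neighborFinset v b).1 (Finset.mem_sdiff.1 hb).1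
            have hdb : G.degree b ≤ Δ := hmax ▸ G.degree_le_maxDegree b
            rw [Finset.card_erase_of_mem (mem_inc ((G.mem_edgeSet).2 hadj) (by simp)),
              G.card_incidenceFinset_eq_degree]
            omega
          have hNScard : (G.neighborFinset v \ S).card = 2 := by
            rw [Finset.card_sdiff_of_subset hSN, hsmall]
            have : (G.neighborFinset v).card = G.degree v := rfl
            rw [this]
            omega
          rw [hNScard] at hNSsum
          omega
        refine lt_of_le_of_lt (Finset.card_union_le _ _) ?_
        have := Finset.card_union_le ((G.incidenceFinset v).erase s(v, u))
          (if G.degree u = 2 then (G.incidenceFinset (wf u)).erase s(u, wf u) else ∅)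
        omega
      · -- coverage
        intro f hfe hfd hconf
        rw [hval] at hconf
        have hfval : f.1 ≠ s(v, u) := fun h => hfe (Subtype.ext (h.trans hval.symm))
        have hcovv : v ∈ f.1 → f.1 ∈ C := fun h => Finset.mem_union_left _
          (Finset.mem_union_left _ (Finset.mem_erase.2 ⟨hfval, mem_inc f.2 h⟩))
        have hcovB : ∀ b, b ∈ B → b ∈ f.1 → f.1 ∈ C := by
          intro b hbB hbf
          obtain ⟨t, hbt, hft⟩ := edge_other f.2 hbf
          rcases hnbru b hbB t hbt with htv | ⟨hdb, htw⟩
          · exact hcovv (by rw [hft, htv]; simp)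
          · exact absurd (hpost _ (hp2_of f b hbB hdb (by rw [hft, htw]))) hfd
        have hcovNB : ∀ b, G.Adj v b → b ∉ B → b ∈ f.1 → f.1 ∈ C := by
          intro b hvb hbB hbf
          obtain ⟨t, hbt, hft⟩ := edge_other f.2 hbf
          by_cases htv : t = v
          · exact hcovv (by rw [hft, htv]; simp)
          · refine Finset.mem_union_right _ (Finset.mem_biUnion.2
              ⟨b, Finset.mem_sdiff.2 ⟨(G.mem_neighborFinset v b).2 hvb, hbB⟩,
                Finset.mem_erase.2 ⟨?_, mem_inc f.2 hbf⟩⟩)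
            rw [hft]
            intro hcontra
            rw [Sym2.eq_swap (a := v) (b := b)] at hcontra
            exact htv (Sym2.congr_right.1 hcontra)
        have hcovw : G.degree u = 2 → wf u ∈ f.1 → f.1 ∈ C := by
          intro hd2 hwf1
          obtain ⟨t, hwt, hft⟩ := edge_other f.2 hwf1
          by_cases htu : t = u
          · exact absurd (hpost _ (hp2_of f u huB hd2
              (by rw [hft, htu, Sym2.eq_swap]))) hfd
          · refine Finset.mem_union_left _ (Finset.mem_union_right _ ?_)
            rw [if_pos hd2]
            refine Finset.mem_erase.2 ⟨?_, mem_inc f.2 hwf1⟩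
            rw [hft]
            intro hcontra
            rw [Sym2.eq_swap (a := u) (b := wf u)] at hcontra
            exact htu (Sym2.congr_right.1 hcontra)
        obtain ⟨α, β, hα, hβ, hor⟩ := hconf
        rcases hor with heq | hadj
        · rcases Sym2.mem_iff.1 hα with h' | h'
          · exact hcovv (by rw [← heq, h'] at hβ; exact hβ)
          · exact hcovB u huB (by rw [← heq, h'] at hβ; exact hβ)
        · rcases Sym2.mem_iff.1 hα with h' | h'
          · rw [h'] at hadj
            by_cases hbB : β ∈ B
            · exact hcovB β hbB hβ
            · exact hcovNB β hadj hbB hβ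
          · rw [h'] at hadj
            rcases hnbru u huB β hadj with hbv | ⟨hd2, hbw⟩
            · exact hcovv (hbv ▸ hβ)
            · exact hcovw hd2 (hbw ▸ hβ)
    · -- phase 2 : e = s(u, wf u) for some u ∈ B with degree 2
      have he2 : e ∈ p2 := by
        have hilen : i < p1.length + p2.length := by
          have := hi
          rw [hLdef, List.length_append] at this
          exact this
        have hEE : L.get ⟨i, hi⟩ = p2[i - p1.length]'(by omega) := by
          rw [List.get_eq_getElem]
          exact List.getElem_append_right (le_of_not_gt hip)
        rw [hedef, hEE]
        exact List.getElem_mem _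
      obtain ⟨u, huB, hd2, hval⟩ := hp2_dest _ he2
      obtain ⟨hadjw, hwnv, hdw⟩ := hwf u huB hd2
      set C : Finset (Sym2 V) := (G.incidenceFinset v ∪
        (G.incidenceFinset (wf u)).erase s(u, wf u)) ∪
        ((G.neighborFinset (wf u)).erase u).biUnion
          (fun z => (G.incidenceFinset z).erase s(wf u, z)) with hCdef
      refine ⟨C, ?_, ?_⟩
      · -- cardinality bound
        have hc1 : (G.incidenceFinset v).card ≤ Δ := by
          rw [G.card_incidenceFinset_eq_degree]
          exact hkΔ
        have hc2 : ((G.incidenceFinset (wf u)).erase s(u, wf u)).card ≤ 2 := by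
          rw [Finset.card_erase_of_mem (mem_inc ((G.mem_edgeSet).2 hadjw) (by simp)),
            G.card_incidenceFinset_eq_degree]
          omega
        have hc3 : (((G.neighborFinset (wf u)).erase u).biUnion
            (fun z => (G.incidenceFinset z).erase s(wf u, z))).card ≤ 2 * (Δ - 1) := by
          refine le_trans (Finset.card_biUnion_le) ?_
          have hsum : ∑ z ∈ ((G.neighborFinset (wf u)).erase u),
              ((G.incidenceFinset z).erase s(wf u, z)).card
              ≤ ((G.neighborFinset (wf u)).erase u).card * (Δ - 1) := by
            rw [← smul_eq_mul]
            apply Finset.sum_le_card_nsmul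
            intro z hz
            have hadj : G.Adj (wf u) z :=
              (G.mem_neighborFinset (wf u) z).1 (Finset.mem_of_mem_erase hz)
            have hdz : G.degree z ≤ Δ := hmax ▸ G.degree_le_maxDegree z
            rw [Finset.card_erase_of_mem (mem_inc ((G.mem_edgeSet).2 hadj) (by simp)),
              G.card_incidenceFinset_eq_degree]
            omega
          have hcarderase : ((G.neighborFinset (wf u)).erase u).card ≤ 2 := by
            rw [Finset.card_erase_of_mem
              ((G.mem_neighborFinset (wf u) u).2 hadjw.symm)]
            have : (G.neighborFinset (wf u)).card = G.degree (wf u) := rfl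
            rw [this]
            omega
          calc _ ≤ ((G.neighborFinset (wf u)).erase u).card * (Δ - 1) := hsum
          _ ≤ 2 * (Δ - 1) := by
              apply Nat.mul_le_mul_right
              exact hcarderase
        refine lt_of_le_of_lt (Finset.card_union_le _ _) ?_
        have := Finset.card_union_le (G.incidenceFinset v)
          ((G.incidenceFinset (wf u)).erase s(u, wf u))
        omega
      · -- coverage
        intro f hfe hfd hconf
        rw [hval] at hconf
        have hfval : f.1 ≠ s(u, wf u) := fun h => hfe (Subtype.ext (h.trans hval.symm))
        have hcovv : v ∈ f.1 → f.1 ∈ C := fun h => Finset.mem_union_left _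
          (Finset.mem_union_left _ (mem_inc f.2 h))
        have hcovw : wf u ∈ f.1 → f.1 ∈ C := fun h => Finset.mem_union_left _
          (Finset.mem_union_right _ (Finset.mem_erase.2 ⟨hfval, mem_inc f.2 h⟩))
        have hcovu : u ∈ f.1 → f.1 ∈ C := by
          intro huf
          obtain ⟨t, hut, hft⟩ := edge_other f.2 huf
          rcases hnbru u huB t hut with htv | ⟨_, htw⟩
          · exact hcovv (by rw [hft, htv]; simp)
          · exact absurd (by rw [hft, htw]) hfval
        have hcovz : ∀ z, G.Adj (wf u) z → z ≠ u → z ∈ f.1 → f.1 ∈ C := by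
          intro z hwz hzu hzf
          obtain ⟨t, hzt, hft⟩ := edge_other f.2 hzf
          by_cases htw : t = wf u
          · exact hcovw (by rw [hft, htw]; simp)
          · refine Finset.mem_union_right _ (Finset.mem_biUnion.2
              ⟨z, Finset.mem_erase.2 ⟨hzu, (G.mem_neighborFinset (wf u) z).2 hwz⟩,
                Finset.mem_erase.2 ⟨?_, mem_inc f.2 hzf⟩⟩)
            rw [hft]
            intro hcontra
            rw [Sym2.eq_swap (a := wf u) (b := z)] at hcontra
            exact htw (Sym2.congr_right.1 hcontra)
        obtain ⟨α, β, hα, hβ, hor⟩ := hconf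
        rcases hor with heq | hadj
        · rcases Sym2.mem_iff.1 hα with h' | h'
          · exact hcovu (by rw [← heq, h'] at hβ; exact hβ)
          · exact hcovw (by rw [← heq, h'] at hβ; exact hβ)
        · rcases Sym2.mem_iff.1 hα with h' | h'
          · rw [h'] at hadj
            rcases hnbru u huB β hadj with hbv | ⟨_, hbw⟩
            · exact hcovv (hbv ▸ hβ)
            · exact hcovw (hbw ▸ hβ)
          · rw [h'] at hadj
            by_cases hbu : β = u
            · exact hcovu (hbu ▸ hβ)
            · exact hcovz β hadj hbu hβ
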